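/- Let a > 0, λ ≥ 0, and let f : [0,∞) → ℝ be defined by f(r) = (1/2)·∫₀^r exp((a s⁴ − 2λ s²)/8)·(∫_s^∞ exp(−(a σ⁴ − 2λ σ²)/8) dσ) ds. Then (a r³ − λ r)·f'(r) < 1 for every r ≥ 0. -/

import Mathlib

open MeasureTheory Set Filter Topology

/-- For `a > 0`, `λ ≥ 0`, and
`f r = (1/2) ∫₀^r exp((a s⁴ − 2λ s²)/8) (∫_s^∞ exp(−(a σ⁴ − 2λ σ²)/8) dσ) ds`,
one has `(a r³ − λ r) f'(r) < 1` for every `r ≥ 0`. -/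
theorem stmt2 (a lam : ℝ) (ha : 0 < a) (hlam : 0 ≤ lam) (f : ℝ → ℝ)
    (hf : ∀ r : ℝ, f r = (1 / 2) * ∫ s in (0:ℝ)..r,
      Real.exp ((a * s ^ 4 - 2 * lam * s ^ 2) / 8) *
        ∫ σ in Set.Ioi s, Real.exp (-((a * σ ^ 4 - 2 * lam * σ ^ 2) / 8))) :
    ∀ r : ℝ, 0 ≤ r → (a * r ^ 3 - lam * r) * deriv f r < 1 := by
  have hK : ∀ σ : ℝ, a / 16 * σ ^ 2 - (lam ^ 2 / (4 * a) + a / 16)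
      ≤ (a * σ ^ 4 - 2 * lam * σ ^ 2) / 8 := by
    intro σ
    have hb1 : lam * σ ^ 2 / 4 - a * σ ^ 4 / 16 ≤ lam ^ 2 / (4 * a) := by
      rw [le_div_iff₀ (by positivity)]
      nlinarith [sq_nonneg (a * σ ^ 2 - 2 * lam)]
    nlinarith [sq_nonneg (σ ^ 2 - 1), ha]
  -- the integrand of the inner integral
  have hcont : Continuous fun σ : ℝ => Real.exp (-((a * σ ^ 4 - 2 * lam * σ ^ 2) / 8)) := by
    fun_prop
  have hint : Integrable fun σ : ℝ => Real.exp (-((a * σ ^ 4 - 2 * lam * σ ^ 2) / 8)) := by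
    refine Integrable.mono'
      ((integrable_exp_neg_mul_sq (show (0:ℝ) < a / 16 by positivity)).const_mul
        (Real.exp (lam ^ 2 / (4 * a) + a / 16))) hcont.aestronglyMeasurable ?_
    filter_upwards with σ
    rw [Real.norm_eq_abs, Real.abs_exp, ← Real.exp_add, Real.exp_le_exp]
    have := hK σ
    linarith
  -- continuity of the tail integral
  have hIcont : Continuous fun s : ℝ =>
      ∫ σ in Set.Ioi s, Real.exp (-((a * σ ^ 4 - 2 * lam * σ ^ 2) / 8)) := by
    have key : ∀ s : ℝ,
        (∫ σ in Set.Ioi s, Real.exp (-((a * σ ^ 4 - 2 * lam * σ ^ 2) / 8)))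
          = (∫ σ : ℝ, Real.exp (-((a * σ ^ 4 - 2 * lam * σ ^ 2) / 8)))
            - ((∫ σ in Set.Iic (0:ℝ), Real.exp (-((a * σ ^ 4 - 2 * lam * σ ^ 2) / 8)))
              + ∫ σ in (0:ℝ)..s, Real.exp (-((a * σ ^ 4 - 2 * lam * σ ^ 2) / 8))) := by
      intro s
      have h1 := intervalIntegral.integral_Iic_add_Ioi (b := s) hint.integrableOn hint.integrableOn
      have h2 := intervalIntegral.integral_Iic_sub_Iic (a := (0:ℝ)) (b := s)
        hint.integrableOn hint.integrableOn
      linarith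
    simp only [key]
    exact continuous_const.sub
      (continuous_const.add (hint.continuous_primitive 0))
  have hHcont : Continuous fun s : ℝ =>
      Real.exp ((a * s ^ 4 - 2 * lam * s ^ 2) / 8) *
        ∫ σ in Set.Ioi s, Real.exp (-((a * σ ^ 4 - 2 * lam * σ ^ 2) / 8)) := by
    exact (by fun_prop : Continuous fun s : ℝ =>
      Real.exp ((a * s ^ 4 - 2 * lam * s ^ 2) / 8)).mul hIcont
  intro r hr
  -- compute the derivative
  have hderiv : deriv f r = (1 / 2) *
      (Real.exp ((a * r ^ 4 - 2 * lam * r ^ 2) / 8) *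
        ∫ σ in Set.Ioi r, Real.exp (-((a * σ ^ 4 - 2 * lam * σ ^ 2) / 8))) := by
    have hfe : f = fun u : ℝ => (1 / 2) * ∫ s in (0:ℝ)..u,
        Real.exp ((a * s ^ 4 - 2 * lam * s ^ 2) / 8) *
          ∫ σ in Set.Ioi s, Real.exp (-((a * σ ^ 4 - 2 * lam * σ ^ 2) / 8)) := funext hf
    rw [hfe, deriv_const_mul_field, Continuous.deriv_integral _ hHcont 0 r]
  rw [hderiv]
  have hI0 : 0 ≤ ∫ σ in Set.Ioi r, Real.exp (-((a * σ ^ 4 - 2 * lam * σ ^ 2) / 8)) :=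
    setIntegral_nonneg measurableSet_Ioi fun x _ => (Real.exp_pos _).le
  rcases le_or_gt (a * r ^ 3 - lam * r) 0 with hc | hc
  · have h2 : (0:ℝ) ≤ (1 / 2) *
        (Real.exp ((a * r ^ 4 - 2 * lam * r ^ 2) / 8) *
          ∫ σ in Set.Ioi r, Real.exp (-((a * σ ^ 4 - 2 * lam * σ ^ 2) / 8))) := by
      positivity
    nlinarith
  · -- positive coefficient case
    have hr0 : 0 < r := by
      rcases hr.lt_or_eq with h | h
      · exact h
      · exfalso; rw [← h] at hc; simp at hc
    have hq : 0 < a * r ^ 2 - lam := by nlinarith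
    -- derivative of -exp(-g)
    have hd : ∀ σ : ℝ, HasDerivAt (fun t : ℝ => -Real.exp (-((a * t ^ 4 - 2 * lam * t ^ 2) / 8)))
        ((a * σ ^ 3 - lam * σ) / 2 * Real.exp (-((a * σ ^ 4 - 2 * lam * σ ^ 2) / 8))) σ := by
      intro σ
      have h1 : HasDerivAt (fun t : ℝ => -((a * t ^ 4 - 2 * lam * t ^ 2) / 8))
          (-((a * (4 * σ ^ 3) - 2 * lam * (2 * σ)) / 8)) σ := by
        have : HasDerivAt (fun t : ℝ => (a * t ^ 4 - 2 * lam * t ^ 2) / 8)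
            ((a * (4 * σ ^ 3) - 2 * lam * (2 * σ)) / 8) σ := by
          have h4 : HasDerivAt (fun t : ℝ => a * t ^ 4) (a * (4 * σ ^ 3)) σ := by
            simpa using (hasDerivAt_pow 4 σ).const_mul a
          have h5 : HasDerivAt (fun t : ℝ => 2 * lam * t ^ 2) (2 * lam * (2 * σ)) σ := by
            simpa using (hasDerivAt_pow 2 σ).const_mul (2 * lam)
          exact (h4.sub h5).div_const 8
        exact this.neg
      have h2 := h1.exp.neg
      refine h2.congr_deriv ?_
      ring
    -- tendsto 0 at infinity
    have htend : Tendsto (fun t : ℝ => -Real.exp (-((a * t ^ 4 - 2 * lam * t ^ 2) / 8)))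
        atTop (𝓝 0) := by
      have hg : Tendsto (fun t : ℝ => (a * t ^ 4 - 2 * lam * t ^ 2) / 8) atTop atTop := by
        refine tendsto_atTop_mono hK ?_
        refine tendsto_atTop_add_const_right _ _ ?_
        exact (tendsto_pow_atTop (by norm_num : 2 ≠ 0)).const_mul_atTop (by positivity)
      have := (Real.tendsto_exp_atBot.comp (tendsto_neg_atBot_iff.mpr hg)).neg
      simpa using this
    have hnonneg : ∀ σ ∈ Set.Ioi r,
        0 ≤ (a * σ ^ 3 - lam * σ) / 2 * Real.exp (-((a * σ ^ 4 - 2 * lam * σ ^ 2) / 8)) := by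
      intro σ hσ
      have hσr : r < σ := hσ
      have hσ0 : 0 < σ := hr0.trans hσr
      have hq2 : 0 < a * σ ^ 2 - lam := by
        nlinarith [mul_pos ha (mul_pos (sub_pos.mpr hσr) (show (0:ℝ) < σ + r by linarith))]
      have : 0 ≤ (a * σ ^ 3 - lam * σ) / 2 := by nlinarith [mul_pos hσ0 hq2]
      exact mul_nonneg this (Real.exp_pos _).le
    have hcontIci : ContinuousWithinAt
        (fun t : ℝ => -Real.exp (-((a * t ^ 4 - 2 * lam * t ^ 2) / 8))) (Set.Ici r) r :=
      (hcont.neg.continuousAt).continuousWithinAt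
    have hval : (∫ σ in Set.Ioi r,
        (a * σ ^ 3 - lam * σ) / 2 * Real.exp (-((a * σ ^ 4 - 2 * lam * σ ^ 2) / 8)))
        = Real.exp (-((a * r ^ 4 - 2 * lam * r ^ 2) / 8)) := by
      have := integral_Ioi_of_hasDerivAt_of_nonneg hcontIci
        (fun x _ => hd x) hnonneg htend
      simpa using this
    have hintp : IntegrableOn
        (fun σ : ℝ => (a * σ ^ 3 - lam * σ) / 2 * Real.exp (-((a * σ ^ 4 - 2 * lam * σ ^ 2) / 8)))
        (Set.Ioi r) :=
      integrableOn_Ioi_deriv_of_nonneg hcontIci (fun x _ => hd x) hnonneg htend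
    -- strict comparison
    have hpos : 0 < ∫ σ in Set.Ioi r,
        ((a * σ ^ 3 - lam * σ) / 2 * Real.exp (-((a * σ ^ 4 - 2 * lam * σ ^ 2) / 8))
          - (a * r ^ 3 - lam * r) / 2 * Real.exp (-((a * σ ^ 4 - 2 * lam * σ ^ 2) / 8))) := by
      have hqpos : ∀ σ ∈ Set.Ioi r,
          0 < (a * σ ^ 3 - lam * σ) / 2 * Real.exp (-((a * σ ^ 4 - 2 * lam * σ ^ 2) / 8))
            - (a * r ^ 3 - lam * r) / 2 * Real.exp (-((a * σ ^ 4 - 2 * lam * σ ^ 2) / 8)) := by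
        intro σ hσ
        have hσr : r < σ := hσ
        have hσ0 : 0 < σ := hr0.trans hσr
        have hfac : 0 < a * σ ^ 2 + a * σ * r + a * r ^ 2 - lam := by
          nlinarith [mul_pos ha (mul_pos hσ0 hσ0), mul_pos ha (mul_pos hσ0 hr0)]
        have h1 : (a * r ^ 3 - lam * r) / 2 < (a * σ ^ 3 - lam * σ) / 2 := by
          nlinarith [mul_pos (sub_pos.mpr hσr) hfac]
        have h2 := Real.exp_pos (-((a * σ ^ 4 - 2 * lam * σ ^ 2) / 8))
        nlinarith
      rw [setIntegral_pos_iff_support_of_nonneg_ae]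
      · refine lt_of_lt_of_le ?_ (measure_mono (fun σ hσ => ⟨(hqpos σ hσ).ne', hσ⟩))
        rw [Real.volume_Ioi]
        exact ENNReal.zero_lt_top
      · rw [Filter.EventuallyLE, ae_restrict_iff' measurableSet_Ioi]
        exact Filter.Eventually.of_forall fun σ hσ => (hqpos σ hσ).le
      · exact hintp.sub ((hint.const_mul ((a * r ^ 3 - lam * r) / 2)).integrableOn)
    rw [integral_sub hintp ((hint.const_mul _).integrableOn), hval,
      integral_const_mul, sub_pos] at hpos
    -- conclude
    have hE : Real.exp (-((a * r ^ 4 - 2 * lam * r ^ 2) / 8)) *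
        Real.exp ((a * r ^ 4 - 2 * lam * r ^ 2) / 8) = 1 := by
      rw [← Real.exp_add]; simp
    have hEpos := Real.exp_pos ((a * r ^ 4 - 2 * lam * r ^ 2) / 8)
    nlinarith [hpos, hEpos, hE]
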